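/- In the discontinuous Galerkin setting, for all m ∈ {1,…,M} and every ξ ∈ 𝒰^τ with ξ(t₀−) := 0, the quantity E_d^m := Q_m,ρ[(∂ₜM₀ + M₁)ξ, ξ] + ⟨M₀[ξ]_{m−1}^0, ξ(t_{m−1}+)⟩_H satisfies E_d^m ≥ (1/2)[⟨M₀ξ(t_m−), ξ(t_m−)⟩ e^{−2ρτ_m} − ⟨M₀ξ(t_{m−1}−), ξ(t_{m−1}−)⟩ + ⟨M₀[ξ]_{m−1}^0, [ξ]_{m−1}^0⟩] + γ ⦀ξ⦀²_{Q,ρ,m}. -/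

import Mathlib

open MeasureTheory Real
open scoped RealInnerProductSpace

/-- `f` is an `H`-valued polynomial of degree at most `q`. -/
def IsPolyDeg {H : Type*} [NormedAddCommGroup H] [InnerProductSpace ℝ H]
    (q : ℕ) (f : ℝ → H) : Prop :=
  ∃ c : Fin (q + 1) → H, ∀ s : ℝ, f s = ∑ i : Fin (q + 1), s ^ (i : ℕ) • c i

/-- A right-sided Gauß–Radau quadrature with `q+1` nodes on the interval `(a,b]` with
weighting function `w`: nodes `a < node₀ < ⋯ < node_q = b`, positive weights, exact for
polynomials of degree at most `2q`. -/
def IsGaussRadauOn (q : ℕ) (w : ℝ → ℝ) (a b : ℝ) (node wt : Fin (q + 1) → ℝ) : Prop :=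
  StrictMono node ∧ (∀ i, node i ∈ Set.Ioc a b) ∧ node (Fin.last q) = b ∧
    (∀ i, 0 < wt i) ∧
    ∀ p : Polynomial ℝ, p.natDegree ≤ 2 * q →
      ∫ s in Set.Ioo a b, p.eval s * w s = ∑ i, wt i * p.eval (node i)

/-- Lemma `lem:lhs2`: lower bound for the discrete energy
`E_d^m = Q_{m,ρ}[(∂ₜM₀+M₁)ξ, ξ] + ⟨M₀[ξ]_{m-1}^0, ξ(t_{m-1}+)⟩` for piecewise polynomial
`ξ ∈ 𝒰^τ` (with the convention `ξ(t₀-) = 0`).  The piece of `ξ` on `I_m = (t_{m-1}, t_m]`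
is the polynomial `ξ m`, so `ξ(t_{m-1}+) = ξ m (t_{m-1})`, `ξ(t_m-) = ξ m (t m)` and
`ξ(t_{m-1}-) = ξ (m-1) (t_{m-1})` for `m ≥ 2`. -/
theorem stmt_2 {H : Type*} [NormedAddCommGroup H] [InnerProductSpace ℝ H]
    (M₀ M₁ : H →L[ℝ] H)
    (hM₀sa : ∀ x y : H, ⟪M₀ x, y⟫ = ⟪x, M₀ y⟫)
    (ρ γ : ℝ) (hρ : 0 < ρ) (hγ : 0 < γ)
    (hpos : ∀ x : H, γ * ⟪x, x⟫ ≤ ⟪ρ • M₀ x + M₁ x, x⟫)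
    (q N : ℕ) (hN : 1 ≤ N) (t : ℕ → ℝ) (ht0 : t 0 = 0)
    (htmono : ∀ m, m < N → t m < t (m + 1))
    (node wt : ℕ → Fin (q + 1) → ℝ)
    (hGR : ∀ m, 1 ≤ m → m ≤ N →
      IsGaussRadauOn q (fun s => Real.exp (-2 * ρ * (s - t (m - 1)))) (t (m - 1)) (t m)
        (node m) (wt m))
    (ξ : ℕ → ℝ → H) (hξ : ∀ m, 1 ≤ m → m ≤ N → IsPolyDeg q (ξ m)) :
    ∀ m, 1 ≤ m → m ≤ N →
      (1 / 2) * (⟪M₀ (ξ m (t m)), ξ m (t m)⟫ * Real.exp (-2 * ρ * (t m - t (m - 1)))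
            - ⟪M₀ (if m = 1 then (0 : H) else ξ (m - 1) (t (m - 1))),
                (if m = 1 then (0 : H) else ξ (m - 1) (t (m - 1)))⟫
            + ⟪M₀ (ξ m (t (m - 1)) - (if m = 1 then (0 : H) else ξ (m - 1) (t (m - 1)))),
                ξ m (t (m - 1)) - (if m = 1 then (0 : H) else ξ (m - 1) (t (m - 1)))⟫)
          + γ * (∑ i, wt m i * ⟪ξ m (node m i), ξ m (node m i)⟫)
        ≤ (∑ i, wt m i *
              ⟪deriv (fun s => M₀ (ξ m s)) (node m i) + M₁ (ξ m (node m i)),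
                ξ m (node m i)⟫)
          + ⟪M₀ (ξ m (t (m - 1)) - (if m = 1 then (0 : H) else ξ (m - 1) (t (m - 1)))),
              ξ m (t (m - 1))⟫ := by
  intro m hm1 hmN
  obtain ⟨c, hc⟩ := hξ m hm1 hmN
  obtain ⟨hmono, hmem, hlast, hwt, hexact⟩ := hGR m hm1 hmN
  set a := t (m - 1) with ha
  set b := t m with hb
  have hab : a < b := by
    have h := htmono (m - 1) (by omega)
    have hmm : m - 1 + 1 = m := by omega
    rwa [hmm] at h
  set u := ξ m with hu
  set z : H := (if m = 1 then (0 : H) else ξ (m - 1) (t (m - 1))) with hz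
  -- the polynomial with eval = ⟪M₀ u, u⟫
  set P : Polynomial ℝ := ∑ i : Fin (q+1), ∑ j : Fin (q+1),
      Polynomial.C (⟪M₀ (c i), c j⟫) * Polynomial.X ^ ((i:ℕ) + (j:ℕ)) with hP
  have hPeval : ∀ s, P.eval s = ⟪M₀ (u s), u s⟫ := by
    intro s
    rw [hc s]
    rw [map_sum M₀]
    simp only [_root_.map_smul]
    rw [sum_inner]
    simp only [inner_sum, real_inner_smul_left, real_inner_smul_right]
    simp only [hP, Polynomial.eval_finset_sum, Polynomial.eval_mul,
      Polynomial.eval_C, Polynomial.eval_pow, Polynomial.eval_X, pow_add]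
    apply Finset.sum_congr rfl; intro i _
    apply Finset.sum_congr rfl; intro j _
    ring
  have hPdeg : P.natDegree ≤ 2 * q := by
    refine Polynomial.natDegree_sum_le_of_forall_le _ _ (fun i _ => ?_)
    refine Polynomial.natDegree_sum_le_of_forall_le _ _ (fun j _ => ?_)
    refine le_trans (Polynomial.natDegree_C_mul_X_pow_le _ _) ?_
    have := i.2; have := j.2; omega
  -- derivative facts
  have hud : ∀ s : ℝ, HasDerivAt u
      (∑ i : Fin (q+1), (((i:ℕ) : ℝ) * s ^ ((i:ℕ) - 1)) • c i) s := by
    intro s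
    have : (fun s => ∑ i : Fin (q+1), s ^ (i:ℕ) • c i) = u := by
      funext s; rw [hc s]
    rw [← this]
    exact HasDerivAt.fun_sum (fun i _ => (hasDerivAt_pow (i:ℕ) s).smul_const (c i))
  have hgd : ∀ s : ℝ, HasDerivAt (fun s => M₀ (u s))
      (M₀ (∑ i : Fin (q+1), (((i:ℕ) : ℝ) * s ^ ((i:ℕ) - 1)) • c i)) s := by
    intro s
    exact (M₀.hasFDerivAt.comp_hasDerivAt s (hud s))
  have hsymm : ∀ x y : H, ⟪M₀ x, y⟫ = ⟪M₀ y, x⟫ := by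
    intro x y; rw [hM₀sa x y, real_inner_comm]
  have hkey : ∀ s : ℝ, ⟪deriv (fun s => M₀ (u s)) s, u s⟫ = (1/2) * P.derivative.eval s := by
    intro s
    set d : H := ∑ i : Fin (q+1), (((i:ℕ) : ℝ) * s ^ ((i:ℕ) - 1)) • c i with hd
    have hF : HasDerivAt (fun s => ⟪M₀ (u s), u s⟫) (⟪M₀ (u s), d⟫ + ⟪M₀ d, u s⟫) s :=
      HasDerivAt.inner ℝ (hgd s) (hud s)
    have hF2 : deriv (fun s => ⟪M₀ (u s), u s⟫) s = P.derivative.eval s := by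
      have : (fun s => ⟪M₀ (u s), u s⟫) = fun s => P.eval s := by
        funext s; rw [hPeval s]
      rw [this, Polynomial.deriv]
    rw [hF.deriv] at hF2
    rw [(hgd s).deriv]
    rw [hsymm (u s) d] at hF2
    linarith
  -- pointwise bound
  have hpt : ∀ s : ℝ, (1/2) * P.derivative.eval s - ρ * P.eval s + γ * ⟪u s, u s⟫ ≤
      ⟪deriv (fun s => M₀ (u s)) s + M₁ (u s), u s⟫ := by
    intro s
    rw [inner_add_left, hkey s]
    have h1 := hpos (u s)
    rw [inner_add_left, real_inner_smul_left] at h1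
    rw [hPeval s]
    linarith
  -- summed bound
  have hsum : (∑ i, wt m i * ((Polynomial.C (1/2:ℝ) * P.derivative
        - Polynomial.C ρ * P).eval (node m i)))
      + γ * (∑ i, wt m i * ⟪u (node m i), u (node m i)⟫)
      ≤ ∑ i, wt m i *
          ⟪deriv (fun s => M₀ (u s)) (node m i) + M₁ (u (node m i)), u (node m i)⟫ := by
    have h1 : ∀ i : Fin (q+1),
        wt m i * ((Polynomial.C (1/2:ℝ) * P.derivative - Polynomial.C ρ * P).eval (node m i))
          + wt m i * (γ * ⟪u (node m i), u (node m i)⟫)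
        ≤ wt m i *
          ⟪deriv (fun s => M₀ (u s)) (node m i) + M₁ (u (node m i)), u (node m i)⟫ := by
      intro i
      rw [← mul_add]
      refine mul_le_mul_of_nonneg_left ?_ (hwt i).le
      have := hpt (node m i)
      simp only [Polynomial.eval_sub, Polynomial.eval_mul, Polynomial.eval_C]
      linarith
    calc (∑ i, wt m i * ((Polynomial.C (1/2:ℝ) * P.derivative
            - Polynomial.C ρ * P).eval (node m i)))
          + γ * (∑ i, wt m i * ⟪u (node m i), u (node m i)⟫)
        = ∑ i, (wt m i * ((Polynomial.C (1/2:ℝ) * P.derivative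
            - Polynomial.C ρ * P).eval (node m i))
          + wt m i * (γ * ⟪u (node m i), u (node m i)⟫)) := by
          rw [Finset.sum_add_distrib]
          congr 1
          rw [Finset.mul_sum]
          exact Finset.sum_congr rfl (fun i _ => by ring)
      _ ≤ _ := Finset.sum_le_sum (fun i _ => h1 i)
  -- quadrature exactness + FTC
  have hRdeg : (Polynomial.C (1/2:ℝ) * P.derivative - Polynomial.C ρ * P).natDegree ≤ 2 * q := by
    refine le_trans (Polynomial.natDegree_sub_le _ _) (max_le ?_ ?_)
    · exact le_trans (Polynomial.natDegree_C_mul_le _ _)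
        (le_trans (Polynomial.natDegree_derivative_le _) (by omega))
    · exact le_trans (Polynomial.natDegree_C_mul_le _ _) hPdeg
  have hquad : ∫ s in Set.Ioo a b,
      (Polynomial.C (1/2:ℝ) * P.derivative - Polynomial.C ρ * P).eval s
        * Real.exp (-2 * ρ * (s - a))
      = ∑ i, wt m i *
          (Polynomial.C (1/2:ℝ) * P.derivative - Polynomial.C ρ * P).eval (node m i) :=
    hexact _ hRdeg
  have hFTC : ∫ s in Set.Ioo a b,
      (Polynomial.C (1/2:ℝ) * P.derivative - Polynomial.C ρ * P).eval s
        * Real.exp (-2 * ρ * (s - a))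
      = (1/2) * P.eval b * Real.exp (-2 * ρ * (b - a)) - (1/2) * P.eval a := by
    have hG : ∀ s : ℝ, HasDerivAt (fun s => (1/2) * P.eval s * Real.exp (-2 * ρ * (s - a)))
        ((Polynomial.C (1/2:ℝ) * P.derivative - Polynomial.C ρ * P).eval s
          * Real.exp (-2 * ρ * (s - a))) s := by
      intro s
      have h1 : HasDerivAt (fun s : ℝ => (1/2) * P.eval s) ((1/2) * P.derivative.eval s) s :=
        (P.hasDerivAt s).const_mul (1/2)
      have h2 : HasDerivAt (fun s : ℝ => Real.exp (-2 * ρ * (s - a)))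
          (Real.exp (-2 * ρ * (s - a)) * (-2 * ρ)) s := by
        have h3 : HasDerivAt (fun s : ℝ => -2 * ρ * (s - a)) (-2 * ρ) s := by
          simpa using ((hasDerivAt_id s).sub_const a).const_mul (-2 * ρ)
        exact h3.exp
      have := h1.fun_mul h2
      refine this.congr_deriv ?_
      simp only [Polynomial.eval_sub, Polynomial.eval_mul, Polynomial.eval_C]
      ring
    have hcont : Continuous fun s =>
        (Polynomial.C (1/2:ℝ) * P.derivative - Polynomial.C ρ * P).eval s
          * Real.exp (-2 * ρ * (s - a)) := by
      exact (Polynomial.continuous _).mul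
        (Real.continuous_exp.comp (continuous_const.mul (continuous_id.sub continuous_const)))
    rw [← MeasureTheory.integral_Ioc_eq_integral_Ioo, ← intervalIntegral.integral_of_le hab.le,
      intervalIntegral.integral_eq_sub_of_hasDerivAt (fun s _ => hG s)
        (hcont.intervalIntegrable a b)]
    simp
  rw [hFTC] at hquad
  -- final combination
  have hmain : (1/2) * P.eval b * Real.exp (-2 * ρ * (b - a)) - (1/2) * P.eval a
      + γ * (∑ i, wt m i * ⟪u (node m i), u (node m i)⟫)
      ≤ ∑ i, wt m i *
          ⟪deriv (fun s => M₀ (u s)) (node m i) + M₁ (u (node m i)), u (node m i)⟫ := by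
    rw [hquad]; exact hsum
  have hja : ⟪M₀ (u a - z), u a - z⟫
      = ⟪M₀ (u a), u a⟫ - 2 * ⟪M₀ z, u a⟫ + ⟪M₀ z, z⟫ := by
    simp only [map_sub, inner_sub_left, inner_sub_right]
    rw [hsymm (u a) z]
    ring
  have hjb : ⟪M₀ (u a - z), u a⟫ = ⟪M₀ (u a), u a⟫ - ⟪M₀ z, u a⟫ := by
    simp only [map_sub, inner_sub_left]
  rw [hPeval b, hPeval a] at hmain
  linarith
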